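/- Let (Y_i) be i.i.d. Bernoulli(p) with 0 < p < (t−1)/t for an integer t ≥ 2, and let m = b(t−1) − r ≥ 1 for nonnegative integers r, b. Set M_{r,b}(p) = sup_{n≥1}(r + S_n)/(r + b + n) where S_n = Y_1+⋯+Y_n, and R_t(p) = p·T_t((1−p)p^{t−1}). Then P(M_{r,b}(p) ≤ (t−1)/t) = 1 − R_t(p)^{m+1}. -/

import Mathlib

open MeasureTheory ProbabilityTheory

/-- The `t`-ary tree function `T_t(z) = Σ_{n≥0} C(nt,n) z^n/(n(t−1)+1)`. -/
noncomputable def treeFun (t : ℕ) (z : ℝ) : ℝ :=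
  ∑' n : ℕ, (Nat.choose (n * t) n : ℝ) * z ^ n / ((n : ℝ) * ((t : ℝ) - 1) + 1)

/-- `R_t(p) = p·T_t((1−p) p^{t−1})`. -/
noncomputable def Rt (t : ℕ) (p : ℝ) : ℝ := p * treeFun t ((1 - p) * p ^ (t - 1))

namespace BRW

open scoped ENNReal

/-- step of the walk encoded by a boolean -/
def step (t : ℕ) (b : Bool) : ℤ := if b then 1 else 1 - t

/-- value of a list of steps -/
def lval (t : ℕ) (l : List Bool) : ℤ := (l.map (step t)).sum

@[simp] lemma lval_nil (t : ℕ) : lval t List.nil = 0 := rfl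

lemma lval_append (t : ℕ) (a b : List Bool) : lval t (a ++ b) = lval t a + lval t b := by
  simp [lval]

lemma lval_cons (t : ℕ) (x : Bool) (l : List Bool) :
    lval t (x :: l) = step t x + lval t l := by simp [lval]

lemma step_le_one (t : ℕ) (b : Bool) : step t b ≤ 1 := by
  cases b <;> simp [step] <;> omega

lemma lval_le_length (t : ℕ) (l : List Bool) : lval t l ≤ l.length := by
  induction l with
  | nil => simp
  | cons x xs ih =>
    have := step_le_one t x
    simp only [lval_cons, List.length_cons]
    push_cast
    omega

lemma lval_take_add (t : ℕ) (l : List Bool) (m n : ℕ) :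
    lval t (l.take (m + n)) = lval t (l.take m) + lval t ((l.drop m).take n) := by
  rw [List.take_add, lval_append]

lemma lval_take_succ_le (t : ℕ) (l : List Bool) (i : ℕ) :
    lval t (l.take (i + 1)) ≤ lval t (l.take i) + 1 := by
  rw [lval_take_add]
  have h1 : lval t ((l.drop i).take 1) ≤ ((l.drop i).take 1).length :=
    lval_le_length _ _
  have h2 : ((l.drop i).take 1).length ≤ 1 := by
    simp [List.length_take]
  have : ((l.drop i).take 1).length ≤ 1 := h2
  have := h1.trans (by exact_mod_cast Nat.cast_le.2 h2)
  omega

/-- abstract first-crossing lemma -/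
lemma crossing {v : ℕ → ℤ} (h0 : v 0 = 0) (hstep : ∀ i, v (i + 1) ≤ v i + 1)
    {k : ℤ} (hk : 0 < k) {n : ℕ} (hn : k ≤ v n) :
    ∃ i, 0 < i ∧ i ≤ n ∧ v i = k ∧ ∀ j < i, v j < k := by
  classical
  have hex : ∃ i, k ≤ v i := ⟨n, hn⟩
  set i := Nat.find hex with hi
  have hik : k ≤ v i := Nat.find_spec hex
  have hlt : ∀ j < i, v j < k := fun j hj => by
    have := Nat.find_min hex hj
    omega
  have hi0 : 0 < i := by
    rcases Nat.eq_zero_or_pos i with h | h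
    · rw [h] at hik; omega
    · exact h
  have hin : i ≤ n := Nat.find_min' hex hn
  refine ⟨i, hi0, hin, ?_, hlt⟩
  have h1 : v (i - 1) < k := hlt _ (by omega)
  have h2 : v i ≤ v (i - 1) + 1 := by
    have := hstep (i - 1)
    rwa [Nat.sub_add_cancel hi0] at this
  omega


/-- first-passage lists to level `k` -/
def FP (t k : ℕ) : Set (List Bool) :=
  {l | lval t l = k ∧ ∀ i < l.length, lval t (l.take i) < k}

lemma lval_rotate (t : ℕ) (l : List Bool) (j : ℕ) : lval t (l.rotate j) = lval t l := by
  unfold lval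
  exact ((l.rotate_perm j).map (step t)).sum_eq

/-- prefix sums of a rotation -/
lemma lval_rotate_take (t : ℕ) (l : List Bool) {j i : ℕ} (hj : j ≤ l.length)
    (hi : i ≤ l.length) :
    lval t ((l.rotate j).take i) =
      if j + i ≤ l.length then lval t (l.take (j + i)) - lval t (l.take j)
      else (lval t l - lval t (l.take j)) + lval t (l.take (j + i - l.length)) := by
  rw [List.rotate_eq_drop_append_take hj, List.take_append]
  rw [lval_append]
  have hlen : (l.drop j).length = l.length - j := by simp
  split_ifs with h
  · -- i ≤ length - j
    have hle : i ≤ l.length - j := by omega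
    have h1 : lval t (l.take (j + i)) = lval t (l.take j) + lval t ((l.drop j).take i) :=
      lval_take_add t l j i
    have h2 : (l.take j).take (i - (l.drop j).length) = List.nil := by
      rw [hlen]
      have : i - (l.length - j) = 0 := by omega
      simp [this]
    rw [h2]
    have h0 : lval t List.nil = 0 := rfl
    omega
  · -- i > length - j
    have h1 : (l.drop j).take i = l.drop j := by
      apply List.take_of_length_le
      omega
    have h2 : lval t (l.drop j) = lval t l - lval t (l.take j) := by
      have := lval_take_add t l j (l.length - j)
      have h3 : l.take (j + (l.length - j)) = l := by
        apply List.take_of_length_le; omega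
      have h4 : (l.drop j).take (l.length - j) = l.drop j := by
        apply List.take_of_length_le; omega
      rw [h3, h4] at this
      omega
    have h5 : (l.take j).take (i - (l.drop j).length) = l.take (j + i - l.length) := by
      rw [hlen, List.take_take]
      congr 1
      omega
    rw [h1, h2, h5]


theorem rotate_FP_existsUnique {t : ℕ} {l : List Bool} (hsum : lval t l = 1)
    (hN : 0 < l.length) : ∃! j, j < l.length ∧ l.rotate j ∈ FP t 1 := by
  classical
  set N := l.length with hNdef
  set v : ℕ → ℤ := fun i => lval t (l.take i) with hv
  have hfold : ∀ i, lval t (l.take i) = v i := fun i => rfl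
  have hv0 : v 0 = 0 := by simp [hv, lval]
  have hvN : v N = 1 := by
    have h : l.take N = l := List.take_of_length_le (le_refl _)
    simp only [hv, h, hsum]
  have hPex : ∃ j, j < N ∧ ∀ i < N, v i ≤ v j := by
    obtain ⟨j, hj, hmax⟩ := Finset.exists_max_image (Finset.range N) v ⟨0, by simpa using hN⟩
    exact ⟨j, Finset.mem_range.1 hj, fun i hi => hmax i (Finset.mem_range.2 hi)⟩
  obtain ⟨J, ⟨hJN, hJmax⟩, hJmin⟩ :
      ∃ J, (J < N ∧ ∀ i < N, v i ≤ v J) ∧ ∀ j' < J, ¬(j' < N ∧ ∀ i < N, v i ≤ v j') :=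
    ⟨Nat.find hPex, Nat.find_spec hPex, fun _ h => Nat.find_min hPex h⟩
  have hlt : ∀ j' < J, v j' < v J := by
    intro j' hj'
    have hmin := hJmin j' hj'
    push_neg at hmin
    rcases hmin (by omega) with ⟨i, hi, hvi⟩
    exact lt_of_lt_of_le hvi (hJmax i hi)
  have hJ1 : 1 ≤ J → 1 ≤ v J := by
    intro h1
    have := hlt 0 h1
    omega
  refine ⟨J, ⟨hJN, ?_, ?_⟩, ?_⟩
  · rw [lval_rotate, hsum]; rfl
  · -- prefix condition for rotation J
    intro i hi
    rw [List.length_rotate] at hi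
    rcases Nat.eq_zero_or_pos i with h0 | hpos
    · subst h0; simp [lval]
    rw [lval_rotate_take t l (le_of_lt hJN) (le_of_lt hi)]
    split_ifs with hcase
    · rcases lt_or_eq_of_le hcase with hlt2 | heq
      · have := hJmax (J + i) hlt2
        simp only [hfold]
        omega
      · have hJge : 1 ≤ J := by omega
        have h1 := hJ1 hJge
        have hvv : v (J + i) = 1 := by rw [heq]; exact hvN
        simp only [hfold]
        omega
    · have hk : J + i - N < J := by omega
      have := hlt _ hk
      rw [hsum]
      simp only [hfold]
      simp only [← hNdef]
      omega
  · -- uniqueness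
    intro j ⟨hjN, hjFP⟩
    have hpref : ∀ i, 0 < i → i < N → lval t ((l.rotate j).take i) ≤ 0 := by
      intro i h0 hiN
      have := hjFP.2 i (by rwa [List.length_rotate])
      omega
    have f1 : ∀ kk, j < kk → kk < N → v kk ≤ v j := by
      intro kk hjkk hkkN
      have h0 : 0 < kk - j := by omega
      have hform := lval_rotate_take t l (le_of_lt hjN) (le_of_lt (show kk - j < N by omega))
      rw [if_pos (by omega : j + (kk - j) ≤ N)] at hform
      have hthis := hpref (kk - j) h0 (by omega)
      rw [hform] at hthis
      simp only [hfold] at hthis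
      have hjkk' : j + (kk - j) = kk := by omega
      rw [hjkk'] at hthis
      omega
    have f2 : 1 ≤ j → 1 ≤ v j := by
      intro h1
      have h0 : 0 < N - j := by omega
      have hform := lval_rotate_take t l (le_of_lt hjN) (le_of_lt (show N - j < N by omega))
      rw [if_pos (by omega : j + (N - j) ≤ N)] at hform
      have hthis := hpref (N - j) h0 (by omega)
      rw [hform] at hthis
      simp only [hfold] at hthis
      have he : j + (N - j) = N := by omega
      rw [he] at hthis
      omega
    have f3 : 1 ≤ j → ∀ k < j, v k < v j := by
      intro h1 k hk
      rcases Nat.eq_zero_or_pos k with h0 | hkpos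
      · subst h0
        have := f2 h1
        omega
      · have hi : N - j + k < N := by omega
        have h0i : 0 < N - j + k := by omega
        have hform := lval_rotate_take t l (le_of_lt hjN) (le_of_lt hi)
        rw [if_neg (by omega : ¬ j + (N - j + k) ≤ N)] at hform
        have hthis := hpref _ h0i hi
        rw [hform] at hthis
        rw [hsum] at hthis
        simp only [hfold] at hthis
        have he : j + (N - j + k) - N = k := by omega
        rw [he] at hthis
        omega
    have hPj : ∀ i < N, v i ≤ v j := by
      intro i hi
      rcases lt_trichotomy i j with h | h | h
      · rcases Nat.eq_zero_or_pos j with hj0 | hj1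
        · omega
        · exact le_of_lt (f3 hj1 i h)
      · subst h; exact le_refl _
      · exact f1 i h hi
    have hJle : J ≤ j := by
      by_contra hcon
      exact hJmin j (by omega) ⟨hjN, hPj⟩
    rcases lt_or_eq_of_le hJle with hJlt | hJeq
    · have hj1 : 1 ≤ j := by omega
      have h1 := f3 hj1 J hJlt
      have h2 := hJmax j hjN
      omega
    · omega


lemma count_true_add_count_false (l : List Bool) :
    l.count true + l.count false = l.length := by
  induction l with
  | nil => simp
  | cons x xs ih => cases x <;> simp [List.count_cons, ih] <;> omega

lemma lval_eq_counts (t : ℕ) (l : List Bool) :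
    lval t l = (l.count true : ℤ) - ((t : ℤ) - 1) * (l.count false) := by
  induction l with
  | nil => simp [lval]
  | cons x xs ih =>
    cases x <;> simp [lval, List.count_cons, step] at * <;> push_cast <;> rw [ih] <;> ring

/-- lists of length `N` with `d` falses -/
def cSet (N d : ℕ) : Set (List Bool) := {l | l.length = N ∧ l.count false = d}

lemma count_ofFn (b : Bool) : ∀ {N : ℕ} (f : Fin N → Bool),
    (List.ofFn f).count b = (Finset.univ.filter fun i => f i = b).card := by
  intro N
  induction N with
  | zero => intro f; simp
  | succ n ih =>
    intro f
    rw [List.ofFn_succ, List.count_cons, ih]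
    rw [Finset.card_filter, Finset.card_filter, Fin.sum_univ_succ]
    simp [Function.comp]
    split_ifs <;> omega

/-- the functions-side subtype -/
def fSub (N d : ℕ) : Type := {f : Fin N → Bool // (Finset.univ.filter fun i => f i = false).card = d}

noncomputable def cSetEquivF (N d : ℕ) : cSet N d ≃ fSub N d where
  toFun l := ⟨fun i => l.1.get (Fin.cast l.2.1.symm i), by
    have h := count_ofFn false (fun i : Fin N => l.1.get (Fin.cast l.2.1.symm i))
    rw [← h]
    obtain ⟨l, hlen, hc⟩ := l
    subst hlen
    simp only [Fin.cast_refl]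
    rw [show (fun i => l.get (id i)) = l.get by funext i; rfl]
    rw [List.ofFn_get]
    exact hc⟩
  invFun f := ⟨List.ofFn f.1, by
    constructor
    · simp
    · rw [count_ofFn]; exact f.2⟩
  left_inv := by
    rintro ⟨l, hlen, hc⟩
    subst hlen
    simp only [Fin.cast_refl]
    apply Subtype.ext
    show List.ofFn _ = l
    simpa using List.ofFn_get l
  right_inv := by
    rintro ⟨f, hf⟩
    apply Subtype.ext
    funext i
    show (List.ofFn f).get _ = f i
    rw [List.get_ofFn]
    congr 1

noncomputable def fSubEquivP (N d : ℕ) :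
    fSub N d ≃ {s : Finset (Fin N) // s ∈ Finset.powersetCard d Finset.univ} where
  toFun f := ⟨Finset.univ.filter fun i => f.1 i = false, by
    rw [Finset.mem_powersetCard]
    exact ⟨Finset.filter_subset _ _, f.2⟩⟩
  invFun s := ⟨fun i => decide (i ∉ s.1), by
    have hs := (Finset.mem_powersetCard.1 s.2).2
    have h : (Finset.univ.filter fun i => decide (i ∉ s.1) = false) = s.1 := by
      ext i; simp
    rw [h, hs]⟩
  left_inv := by
    rintro ⟨f, hf⟩
    apply Subtype.ext
    funext i
    simp only [Finset.mem_filter, Finset.mem_univ, true_and]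
    cases h : f i <;> simp [h]
  right_inv := by
    rintro ⟨s, hs⟩
    apply Subtype.ext
    ext i
    simp

instance cSetFinite (N d : ℕ) : Finite (cSet N d) :=
  Finite.of_equiv _ ((fSubEquivP N d).symm.trans (cSetEquivF N d).symm)

lemma cSet_card (N d : ℕ) : Nat.card (cSet N d) = N.choose d := by
  rw [Nat.card_congr ((cSetEquivF N d).trans (fSubEquivP N d))]
  rw [Nat.card_eq_fintype_card]
  rw [Fintype.card_coe]
  simp [Finset.card_powersetCard]

/-- first-passage lists with `d` falses -/
def FPd (t d : ℕ) : Type := {l : List Bool // l ∈ FP t 1 ∧ l.count false = d}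

lemma FP_one_length {t d : ℕ} (ht : 2 ≤ t) {l : List Bool}
    (hl : l ∈ FP t 1) (hd : l.count false = d) : l.length = t * d + 1 := by
  have h1 := lval_eq_counts t l
  have h2 := count_true_add_count_false l
  rw [hl.1, hd] at h1
  have hA : (t - 1) * d + d = t * d := by
    rw [Nat.sub_one_mul]
    have := Nat.le_mul_of_pos_left d (show 0 < t by omega)
    omega
  have hcast : ((t:ℤ) - 1) * (d:ℤ) = (((t - 1) * d : ℕ) : ℤ) := by
    rw [Nat.cast_mul, Nat.cast_sub (by omega : 1 ≤ t)]
    push_cast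
    ring
  rw [hcast] at h1
  omega


lemma cSet_lval {t d : ℕ} (ht : 2 ≤ t) {l : List Bool} (hl : l ∈ cSet (t * d + 1) d) :
    lval t l = 1 := by
  obtain ⟨hlen, hc⟩ := hl
  rw [lval_eq_counts, hc]
  have h2 := count_true_add_count_false l
  rw [hc, hlen] at h2
  have hA : (t - 1) * d + d = t * d := by
    rw [Nat.sub_one_mul]
    have := Nat.le_mul_of_pos_left d (show 0 < t by omega)
    omega
  have hcast : ((t:ℤ) - 1) * (d:ℤ) = (((t - 1) * d : ℕ) : ℤ) := by
    rw [Nat.cast_mul, Nat.cast_sub (by omega : 1 ≤ t)]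
    push_cast
    ring
  rw [hcast]
  omega

lemma FPd_finite (t d : ℕ) (ht : 2 ≤ t) : Finite (FPd t d) := by
  apply Finite.of_injective (fun l : FPd t d =>
    (⟨l.1, FP_one_length ht l.2.1 l.2.2, l.2.2⟩ : cSet (t * d + 1) d))
  intro a b hab
  apply Subtype.ext
  simpa [Subtype.ext_iff] using hab

/-- rotation map -/
def rotFun (t d : ℕ) (ht : 2 ≤ t) (x : Fin (t * d + 1) × FPd t d) : cSet (t * d + 1) d :=
  ⟨x.2.1.rotate (t * d + 1 - x.1.1),
    by rw [List.length_rotate]; exact FP_one_length ht x.2.2.1 x.2.2.2,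
    by rw [(x.2.1.rotate_perm _).count_eq]; exact x.2.2.2⟩

lemma rotFun_bijective (t d : ℕ) (ht : 2 ≤ t) : Function.Bijective (rotFun t d ht) := by
  constructor
  · rintro ⟨j, l⟩ ⟨j', l'⟩ h
    have hval : l.1.rotate (t * d + 1 - j.1) = l'.1.rotate (t * d + 1 - j'.1) :=
      congrArg Subtype.val h
    set L : List Bool := l.1.rotate (t * d + 1 - j.1) with hLdef
    have hlen : l.1.length = t * d + 1 := FP_one_length ht l.2.1 l.2.2
    have hlen' : l'.1.length = t * d + 1 := FP_one_length ht l'.2.1 l'.2.2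
    have hLlen : L.length = t * d + 1 := by rw [hLdef, List.length_rotate, hlen]
    have hLl : L.rotate j.1 = l.1 := by
      rw [hLdef, List.rotate_rotate, show t * d + 1 - j.1 + j.1 = t * d + 1 by omega,
        ← hlen, List.rotate_length]
    have hLl' : L.rotate j'.1 = l'.1 := by
      rw [hval, List.rotate_rotate, show t * d + 1 - j'.1 + j'.1 = t * d + 1 by omega,
        ← hlen', List.rotate_length]
    have hlvL : lval t L = 1 := by rw [hLdef, lval_rotate]; exact l.2.1.1
    have HU := rotate_FP_existsUnique hlvL (show 0 < L.length by omega)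
    have hjj : j.1 = j'.1 := by
      apply HU.unique
      · exact ⟨by omega, by rw [hLl]; exact l.2.1⟩
      · exact ⟨by omega, by rw [hLl']; exact l'.2.1⟩
    have hj : j = j' := Fin.ext hjj
    subst hj
    have : l = l' := Subtype.ext (by rw [← hLl, ← hLl'])
    rw [this]
  · rintro ⟨L, hLc⟩
    have hlv : lval t L = 1 := cSet_lval ht hLc
    have hl1 : L.length = t * d + 1 := hLc.1
    obtain ⟨J, hJN, hJFP⟩ := (rotate_FP_existsUnique hlv (by omega)).exists
    have hJd : (L.rotate J).count false = d := by
      rw [(L.rotate_perm _).count_eq]; exact hLc.2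
    refine ⟨(⟨J, by omega⟩, ⟨L.rotate J, hJFP, hJd⟩), ?_⟩
    apply Subtype.ext
    show (L.rotate J).rotate (t * d + 1 - J) = L
    rw [List.rotate_rotate, show J + (t * d + 1 - J) = t * d + 1 by omega, ← hl1,
      List.rotate_length]

noncomputable def rotEquiv (t d : ℕ) (ht : 2 ≤ t) :
    Fin (t * d + 1) × FPd t d ≃ cSet (t * d + 1) d :=
  Equiv.ofBijective _ (rotFun_bijective t d ht)

lemma FPd_card (t d : ℕ) (ht : 2 ≤ t) :
    (t * d + 1) * Nat.card (FPd t d) = (t * d + 1).choose d := by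
  rw [← cSet_card (t * d + 1) d, ← Nat.card_congr (rotEquiv t d ht), Nat.card_prod]
  congr 1
  simp

/-! ### Weights and sums -/

noncomputable def wt (P Q : ℝ≥0∞) (l : List Bool) : ℝ≥0∞ :=
  (l.map (fun b => if b then P else Q)).prod

lemma wt_append (P Q : ℝ≥0∞) (a b : List Bool) :
    wt P Q (a ++ b) = wt P Q a * wt P Q b := by
  simp [wt]

lemma wt_counts (P Q : ℝ≥0∞) (l : List Bool) :
    wt P Q l = P ^ l.count true * Q ^ l.count false := by
  induction l with
  | nil => simp [wt]
  | cons x xs ih =>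
    cases x <;> simp [wt, List.count_cons] at * <;> rw [ih] <;> ring

lemma FP_length_pos {t k : ℕ} (hk : 1 ≤ k) {l : List Bool} (hl : l ∈ FP t k) :
    0 < l.length := by
  rcases Nat.eq_zero_or_pos l.length with h | h
  · exfalso
    have := hl.1
    rw [List.length_eq_zero_iff.1 h] at this
    simp only [lval_nil] at this
    omega
  · exact h

lemma FP_append {t j k : ℕ} (hj : 1 ≤ j) (hk : 1 ≤ k) {a b : List Bool}
    (ha : a ∈ FP t j) (hb : b ∈ FP t k) : a ++ b ∈ FP t (j + k) := by
  constructor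
  · rw [lval_append, ha.1, hb.1]
    push_cast
    ring
  · intro i hi
    rw [List.length_append] at hi
    rcases le_or_gt i a.length with h | h
    · rw [List.take_append_of_le_length h]
      rcases lt_or_eq_of_le h with h' | h'
      · have := ha.2 i h'
        have : lval t (a.take i) < (j : ℤ) := this
        push_cast
        omega
      · rw [h', List.take_length]
        rw [ha.1]
        push_cast
        omega
    · rw [List.take_append, List.take_of_length_le (le_of_lt h), lval_append,
        ha.1]
      have hlt : i - a.length < b.length := by omega
      have := hb.2 _ hlt
      push_cast
      omega

lemma FP_split {t j k : ℕ} (hj : 1 ≤ j) (hk : 1 ≤ k) {c : List Bool}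
    (hc : c ∈ FP t (j + k)) : ∃ a b, a ∈ FP t j ∧ b ∈ FP t k ∧ c = a ++ b := by
  have hcross := crossing (v := fun i => lval t (c.take i)) (by simp [lval])
    (fun i => lval_take_succ_le t c i) (k := (j : ℤ)) (by exact_mod_cast hj)
    (n := c.length) (by
      show (j : ℤ) ≤ lval t (c.take c.length)
      rw [List.take_length, hc.1]
      push_cast
      omega)
  obtain ⟨i₀, hi0pos, hi0le, hi0val, hi0min⟩ := hcross
  refine ⟨c.take i₀, c.drop i₀, ⟨?_, ?_⟩, ⟨?_, ?_⟩, (c.take_append_drop i₀).symm⟩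
  · exact hi0val
  · intro i hi
    rw [List.length_take] at hi
    have hii : i < i₀ := lt_of_lt_of_le hi (min_le_left _ _)
    rw [List.take_take, min_eq_left (le_of_lt hii)]
    exact hi0min i hii
  · have h := lval_append t (c.take i₀) (c.drop i₀)
    rw [c.take_append_drop i₀, hc.1, hi0val] at h
    push_cast at h ⊢
    omega
  · intro i hi
    rw [List.length_drop] at hi
    have h := lval_take_add t c i₀ i
    have hvc : lval t (c.take (i₀ + i)) < ((j : ℤ) + k) := by
      have := hc.2 (i₀ + i) (by omega)
      push_cast at this
      exact this
    rw [hi0val] at h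
    omega

/-- subtype of first-passage lists -/
def FPsub (t k : ℕ) : Type := {l : List Bool // l ∈ FP t k}

noncomputable def appendEquiv (t : ℕ) {j k : ℕ} (hj : 1 ≤ j) (hk : 1 ≤ k) :
    FPsub t j × FPsub t k ≃ FPsub t (j + k) := by
  apply Equiv.ofBijective
    (fun x : FPsub t j × FPsub t k => (⟨x.1.1 ++ x.2.1, FP_append hj hk x.1.2 x.2.2⟩ :
      FPsub t (j + k)))
  constructor
  · rintro ⟨a, b⟩ ⟨a', b'⟩ h
    have hval : a.1 ++ b.1 = a'.1 ++ b'.1 := congrArg Subtype.val h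
    have hlen : a.1.length = a'.1.length := by
      by_contra hne
      rcases lt_or_gt_of_ne hne with hlt | hlt
      · -- a is a proper prefix of a'
        have htk : (a'.1 ++ b'.1).take a.1.length = a'.1.take a.1.length :=
          List.take_append_of_le_length (le_of_lt hlt)
        have htk2 : (a.1 ++ b.1).take a.1.length = a.1 := List.take_left
        have heq : a'.1.take a.1.length = a.1 := by rw [← htk, ← hval, htk2]
        have h1 := a'.2.2 a.1.length hlt
        rw [heq, a.2.1] at h1
        omega
      · have htk : (a.1 ++ b.1).take a'.1.length = a.1.take a'.1.length :=
          List.take_append_of_le_length (le_of_lt hlt)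
        have htk2 : (a'.1 ++ b'.1).take a'.1.length = a'.1 := List.take_left
        have heq : a.1.take a'.1.length = a'.1 := by rw [← htk, hval, htk2]
        have h1 := a.2.2 a'.1.length hlt
        rw [heq, a'.2.1] at h1
        omega
    obtain ⟨h1, h2⟩ := List.append_inj hval hlen
    exact Prod.ext (Subtype.ext h1) (Subtype.ext h2)
  · rintro ⟨c, hc⟩
    obtain ⟨a, b, ha, hb, hab⟩ := FP_split hj hk hc
    exact ⟨(⟨a, ha⟩, ⟨b, hb⟩), Subtype.ext hab.symm⟩

/-- total weight of first-passage lists to level `k` -/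
noncomputable def U (t : ℕ) (P Q : ℝ≥0∞) (k : ℕ) : ℝ≥0∞ :=
  ∑' l : FPsub t k, wt P Q l.1

lemma U_add (t : ℕ) (P Q : ℝ≥0∞) {j k : ℕ} (hj : 1 ≤ j) (hk : 1 ≤ k) :
    U t P Q (j + k) = U t P Q j * U t P Q k := by
  rw [U, ← Equiv.tsum_eq (appendEquiv t hj hk)]
  have h : ∀ x : FPsub t j × FPsub t k,
      wt P Q ((appendEquiv t hj hk x).1) = wt P Q x.1.1 * wt P Q x.2.1 := by
    rintro ⟨a, b⟩
    exact wt_append P Q a.1 b.1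
  rw [tsum_congr h, ENNReal.tsum_prod']
  rw [show (∑' (a : FPsub t j) (b : FPsub t k), wt P Q a.1 * wt P Q b.1) =
    ∑' a : FPsub t j, wt P Q a.1 * ∑' b : FPsub t k, wt P Q b.1 from
      tsum_congr fun a => ENNReal.tsum_mul_left]
  rw [ENNReal.tsum_mul_right]
  rfl

lemma U_pow (t : ℕ) (P Q : ℝ≥0∞) (n : ℕ) : U t P Q (n + 1) = U t P Q 1 ^ (n + 1) := by
  induction n with
  | zero => simp
  | succ n ih =>
    rw [show n + 1 + 1 = (n + 1) + 1 from rfl, U_add t P Q (by omega) (by omega), ih]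
    ring

noncomputable def sigmaEquiv (t : ℕ) : (Σ d : ℕ, FPd t d) ≃ FPsub t 1 := by
  apply Equiv.ofBijective (fun x : Σ d : ℕ, FPd t d => (⟨x.2.1, x.2.2.1⟩ : FPsub t 1))
  constructor
  · rintro ⟨d, l, hl, hd⟩ ⟨d', l', hl', hd'⟩ h
    have hll : l = l' := congrArg Subtype.val h
    subst hll
    subst hd
    subst hd'
    rfl
  · rintro ⟨l, hl⟩
    exact ⟨⟨l.count false, ⟨l, hl, rfl⟩⟩, rfl⟩

lemma FPd_count_true {t d : ℕ} (ht : 2 ≤ t) {l : List Bool} (hl : l ∈ FP t 1)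
    (hd : l.count false = d) : l.count true = (t - 1) * d + 1 := by
  have hlen := FP_one_length ht hl hd
  have h2 := count_true_add_count_false l
  have hA : (t - 1) * d + d = t * d := by
    rw [Nat.sub_one_mul]
    have := Nat.le_mul_of_pos_left d (show 0 < t by omega)
    omega
  omega

lemma U_one (t : ℕ) (ht : 2 ≤ t) (P Q : ℝ≥0∞) :
    U t P Q 1 = ∑' d : ℕ, (Nat.card (FPd t d) : ℝ≥0∞) * (P ^ ((t - 1) * d + 1) * Q ^ d) := by
  rw [U, ← Equiv.tsum_eq (sigmaEquiv t), ENNReal.tsum_sigma']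
  apply tsum_congr
  intro d
  have : ∀ x : FPd t d, wt P Q (sigmaEquiv t ⟨d, x⟩).1 =
      P ^ ((t - 1) * d + 1) * Q ^ d := by
    intro x
    have hx : (sigmaEquiv t ⟨d, x⟩).1 = x.1 := rfl
    rw [hx, wt_counts, FPd_count_true ht x.2.1 x.2.2, x.2.2]
  rw [tsum_congr this]
  haveI := FPd_finite t d ht
  haveI : Fintype (FPd t d) := Fintype.ofFinite _
  rw [tsum_eq_sum (s := Finset.univ) (by simp), Finset.sum_const, Finset.card_univ,
    nsmul_eq_mul, Nat.card_eq_fintype_card]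

/-! ### getD lemmas -/

lemma lval_eq_sum (t : ℕ) (l : List Bool) :
    lval t l = ∑ jj ∈ Finset.range l.length, step t (l.getD jj false) := by
  induction l with
  | nil => simp
  | cons x xs ih =>
    rw [lval_cons, List.length_cons, Finset.sum_range_succ']
    simp only [List.getD_cons_succ, List.getD_cons_zero]
    rw [ih]
    ring

lemma take_getD (l : List Bool) (i jj : ℕ) (d : Bool) (h : jj < i) :
    (l.take i).getD jj d = l.getD jj d := by
  rcases lt_or_ge jj l.length with h2 | h2
  · rw [List.getD_eq_getElem _ _ (by simp [List.length_take]; omega),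
      List.getD_eq_getElem _ _ h2]
    exact List.getElem_take
  · rw [List.getD_eq_default _ _ (by simp [List.length_take]; omega),
      List.getD_eq_default _ _ h2]

lemma prod_getD (f : Bool → ℝ≥0∞) (l : List Bool) :
    ∏ i ∈ Finset.range l.length, f (l.getD i false) = (l.map f).prod := by
  induction l with
  | nil => simp
  | cons x xs ih =>
    rw [List.length_cons, Finset.prod_range_succ']
    simp only [List.getD_cons_succ, List.getD_cons_zero, List.map_cons, List.prod_cons]
    rw [ih]
    ring

/-! ### Measure theory -/

section Meas

variable {Ω : Type*} [MeasurableSpace Ω] (μ : Measure Ω) [IsProbabilityMeasure μ]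
variable (t : ℕ) (p : ℝ) (Y : ℕ → Ω → ℝ)

/-- boolean coding of the Bernoulli variables -/
noncomputable def sB (Y : ℕ → Ω → ℝ) (ω : Ω) (i : ℕ) : Bool := decide (Y i ω = 1)

/-- cylinder event -/
def Cyl (Y : ℕ → Ω → ℝ) (l : List Bool) : Set Ω :=
  {ω | ∀ i < l.length, sB Y ω i = l.getD i false}

def bSet (b : Bool) : Set ℝ := if b then {1} else {1}ᶜ

lemma bSet_measurable (b : Bool) : MeasurableSet (bSet b) := by
  cases b
  · exact (measurableSet_singleton 1).compl
  · exact measurableSet_singleton 1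

lemma sB_eq_iff (ω : Ω) (i : ℕ) (b : Bool) : sB Y ω i = b ↔ Y i ω ∈ bSet b := by
  cases b <;> simp [sB, bSet]

lemma Cyl_eq (l : List Bool) :
    Cyl Y l = ⋂ i ∈ Finset.range l.length, Y i ⁻¹' bSet (l.getD i false) := by
  ext ω
  simp only [Cyl, Set.mem_setOf_eq, Set.mem_iInter, Finset.mem_range, Set.mem_preimage]
  constructor
  · intro h i hi
    exact (sB_eq_iff Y ω i _).1 (h i hi)
  · intro h i hi
    exact (sB_eq_iff Y ω i _).2 (h i hi)

lemma Cyl_measurable (hmeas : ∀ i, Measurable (Y i)) (l : List Bool) :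
    MeasurableSet (Cyl Y l) := by
  rw [Cyl_eq]
  exact Finset.measurableSet_biInter _ fun i _ => hmeas i (bSet_measurable _)

/-- the walk -/
noncomputable def gw (t : ℕ) (Y : ℕ → Ω → ℝ) (n : ℕ) (ω : Ω) : ℤ :=
  ∑ i ∈ Finset.range n, step t (sB Y ω i)

lemma lval_take_of_mem_cyl {l : List Bool} {ω : Ω} (hω : ω ∈ Cyl Y l) {i : ℕ}
    (hi : i ≤ l.length) : lval t (l.take i) = gw t Y i ω := by
  rw [lval_eq_sum, gw]
  rw [List.length_take, min_eq_left hi]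
  apply Finset.sum_congr rfl
  intro jj hjj
  rw [Finset.mem_range] at hjj
  rw [take_getD _ _ _ _ hjj, hω jj (by omega)]

instance FPsub_countable (t k : ℕ) : Countable (FPsub t k) := by
  unfold FPsub
  infer_instance

lemma measure_cyl (hmeas : ∀ i, Measurable (Y i))
    (hindep : iIndepFun Y μ)
    (hbern : ∀ i, μ {ω | Y i ω = 1} = ENNReal.ofReal p)
    (hp0 : 0 ≤ p) (hp1 : p ≤ 1) (l : List Bool) :
    μ (Cyl Y l) = wt (ENNReal.ofReal p) (ENNReal.ofReal (1 - p)) l := by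
  have hfac : ∀ (b : Bool) (i : ℕ), μ (Y i ⁻¹' bSet b) =
      (if b then ENNReal.ofReal p else ENNReal.ofReal (1 - p)) := by
    intro b i
    have h1 : Y i ⁻¹' {1} = {ω | Y i ω = 1} := rfl
    cases b
    · show μ (Y i ⁻¹' {1}ᶜ) = ENNReal.ofReal (1 - p)
      rw [Set.preimage_compl, measure_compl (hmeas i (measurableSet_singleton 1))
        (measure_ne_top μ _), h1, hbern i, measure_univ,
        ENNReal.ofReal_sub _ hp0, ENNReal.ofReal_one]
    · show μ (Y i ⁻¹' {1}) = ENNReal.ofReal p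
      rw [h1, hbern i]
  rw [Cyl_eq]
  rw [hindep.measure_inter_preimage_eq_mul (Finset.range l.length)
    (sets := fun i => bSet (l.getD i false)) (fun i _ => bSet_measurable _)]
  rw [Finset.prod_congr rfl (fun i _ => hfac (l.getD i false) i)]
  rw [wt, ← prod_getD]

lemma Ev_eq {k : ℕ} (hk : 1 ≤ k) :
    {ω | ∃ n : ℕ, (k : ℤ) ≤ gw t Y (n + 1) ω} = ⋃ l : FPsub t k, Cyl Y l.1 := by
  ext ω
  simp only [Set.mem_setOf_eq, Set.mem_iUnion]
  constructor
  · rintro ⟨n, hn⟩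
    have hcross := crossing (v := fun i => gw t Y i ω) (by simp [gw])
      (fun i => by
        show gw t Y (i + 1) ω ≤ gw t Y i ω + 1
        unfold gw
        rw [Finset.sum_range_succ]
        have := step_le_one t (sB Y ω i)
        omega)
      (k := (k : ℤ)) (by exact_mod_cast hk) (n := n + 1) hn
    obtain ⟨n₀, hpos, hle, hval, hmin⟩ := hcross
    set l : List Bool := List.ofFn (fun j : Fin n₀ => sB Y ω j) with hl
    have hlen : l.length = n₀ := by rw [hl, List.length_ofFn]
    have hcyl : ω ∈ Cyl Y l := by
      intro i hi
      rw [hlen] at hi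
      rw [List.getD_eq_getElem _ _ (by rw [hlen]; exact hi)]
      have hgi : l[i]'(by rw [hlen]; exact hi) = sB Y ω i := by
        simp [hl, List.getElem_ofFn]
      rw [hgi]
    have hfp : l ∈ FP t k := by
      constructor
      · have h1 := lval_take_of_mem_cyl t Y hcyl (le_refl l.length)
        rw [List.take_length] at h1
        rw [h1, hlen]
        exact hval
      · intro i hi
        rw [hlen] at hi
        rw [lval_take_of_mem_cyl t Y hcyl (by omega)]
        exact hmin i hi
    exact ⟨⟨l, hfp⟩, hcyl⟩
  · rintro ⟨⟨l, hfp⟩, hcyl⟩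
    have hpos : 0 < l.length := FP_length_pos hk hfp
    refine ⟨l.length - 1, ?_⟩
    have h1 : lval t (l.take l.length) = gw t Y l.length ω :=
      lval_take_of_mem_cyl t Y hcyl (le_refl _)
    rw [List.take_length] at h1
    rw [show l.length - 1 + 1 = l.length by omega, ← h1, hfp.1]

lemma cyl_eq_of_mem {k : ℕ} {l l' : List Bool} (hl : l ∈ FP t k) (hl' : l' ∈ FP t k)
    {ω : Ω} (hω : ω ∈ Cyl Y l) (hω' : ω ∈ Cyl Y l') : l = l' := by
  have key : ∀ a b : List Bool, a ∈ FP t k → b ∈ FP t k → ω ∈ Cyl Y a → ω ∈ Cyl Y b →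
      a.length ≤ b.length → a = b := by
    intro a b ha hb hωa hωb hab
    have htake : b.take a.length = a := by
      apply List.ext_getElem
      · rw [List.length_take]; omega
      · intro i h1 h2
        have hia : i < a.length := h2
        have h3 := hωa i hia
        have h4 := hωb i (by omega)
        rw [List.getD_eq_getElem _ _ hia] at h3
        rw [List.getD_eq_getElem _ _ (by omega : i < b.length)] at h4
        rw [List.getElem_take]
        rw [← h4, ← h3]
    rcases lt_or_eq_of_le hab with hlt | heq
    · exfalso
      have hcon := hb.2 a.length hlt
      rw [htake, ha.1] at hcon
      omega
    · rw [← htake, heq, List.take_length]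
  rcases le_total l.length l'.length with h | h
  · exact key l l' hl hl' hω hω' h
  · exact (key l' l hl' hl hω' hω h).symm

lemma measure_Ev (hmeas : ∀ i, Measurable (Y i))
    (hindep : iIndepFun Y μ)
    (hbern : ∀ i, μ {ω | Y i ω = 1} = ENNReal.ofReal p)
    (hp0 : 0 ≤ p) (hp1 : p ≤ 1) {k : ℕ} (hk : 1 ≤ k) :
    μ {ω | ∃ n : ℕ, (k : ℤ) ≤ gw t Y (n + 1) ω} =
      U t (ENNReal.ofReal p) (ENNReal.ofReal (1 - p)) k := by
  rw [Ev_eq t Y hk]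
  have hdis : Pairwise (Function.onFun Disjoint fun l : FPsub t k => Cyl Y l.1) := by
    rintro l l' hne
    rw [Function.onFun, Set.disjoint_left]
    intro ω hω hω'
    exact hne (Subtype.ext (cyl_eq_of_mem t Y l.2 l'.2 hω hω'))
  rw [measure_iUnion hdis (fun l => Cyl_measurable Y hmeas l.1)]
  exact tsum_congr fun l => measure_cyl μ p Y hmeas hindep hbern hp0 hp1 l.1

lemma gw_eq (n : ℕ) (ω : Ω) :
    gw t Y n ω = (n : ℤ) * (1 - t) +
      t * ∑ i ∈ Finset.range n, (if sB Y ω i then (1:ℤ) else 0) := by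
  have h : ∀ b : Bool, step t b = (1 - t) + t * (if b then (1:ℤ) else 0) := by
    intro b; cases b <;> simp [step]
  rw [gw, Finset.sum_congr rfl (fun i _ => h (sB Y ω i)), Finset.sum_add_distrib,
    Finset.sum_const, Finset.card_range, ← Finset.mul_sum, nsmul_eq_mul]

lemma S_eq (h01 : ∀ i ω, Y i ω = 0 ∨ Y i ω = 1) (n : ℕ) (ω : Ω) :
    ∑ i ∈ Finset.range n, Y i ω =
      ((∑ i ∈ Finset.range n, (if sB Y ω i then (1:ℤ) else 0) : ℤ) : ℝ) := by
  push_cast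
  apply Finset.sum_congr rfl
  intro i _
  rcases h01 i ω with h | h
  · rw [h]
    have : sB Y ω i = false := by simp [sB, h]
    rw [this]
    norm_num
  · rw [h]
    have : sB Y ω i = true := by simp [sB, h]
    rw [this]
    norm_num

end Meas

lemma choose_iden (t d : ℕ) (ht : 2 ≤ t) :
    (t * d).choose d = ((t - 1) * d + 1) * Nat.card (FPd t d) := by
  have hA : (t - 1) * d + d = t * d := by
    rw [Nat.sub_one_mul]
    have := Nat.le_mul_of_pos_left d (show 0 < t by omega)
    omega
  have h1 := FPd_card t d ht
  have h2 := Nat.add_one_mul_choose_eq (t * d) d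
  have h3 := Nat.choose_succ_right_eq (t * d + 1) d
  have h4 : t * d + 1 - d = (t - 1) * d + 1 := by omega
  rw [h4] at h3
  have h5 : (t * d + 1) * (t * d).choose d = ((t - 1) * d + 1) * ((t * d + 1) * Nat.card (FPd t d)) := by
    rw [h1]
    calc (t * d + 1) * (t * d).choose d = (t * d + 1).choose (d + 1) * (d + 1) := h2
    _ = (t * d + 1).choose d * ((t - 1) * d + 1) := h3
    _ = ((t - 1) * d + 1) * (t * d + 1).choose d := by ring
  have h6 : (t * d + 1) * (t * d).choose d =
      (t * d + 1) * (((t - 1) * d + 1) * Nat.card (FPd t d)) := by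
    rw [h5]; ring
  exact Nat.eq_of_mul_eq_mul_left (by omega) h6

lemma Rt_nonneg {t : ℕ} (ht : 2 ≤ t) {p : ℝ} (hp0 : 0 ≤ p) (hp1 : p ≤ 1) : 0 ≤ Rt t p := by
  apply mul_nonneg hp0
  apply tsum_nonneg
  intro n
  apply div_nonneg
  · apply mul_nonneg (by positivity)
    apply pow_nonneg
    apply mul_nonneg (by linarith) (by positivity)
  · have : (0:ℝ) < (n : ℝ) * ((t:ℝ) - 1) + 1 := by
      have h1 : (2:ℝ) ≤ (t:ℝ) := by exact_mod_cast ht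
      have h2 : (0:ℝ) ≤ (n:ℝ) := Nat.cast_nonneg n
      nlinarith
    linarith

lemma U_one_eq_Rt (t : ℕ) (ht : 2 ≤ t) {p : ℝ} (hp0 : 0 ≤ p) (hp1 : p ≤ 1)
    (hfin : U t (ENNReal.ofReal p) (ENNReal.ofReal (1 - p)) 1 ≠ ⊤) :
    U t (ENNReal.ofReal p) (ENNReal.ofReal (1 - p)) 1 = ENNReal.ofReal (Rt t p) := by
  have hq0 : (0:ℝ) ≤ 1 - p := by linarith
  set r : ℕ → ℝ := fun d => (Nat.card (FPd t d) : ℝ) * (p ^ ((t - 1) * d + 1) * (1 - p) ^ d)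
    with hr
  have hrpos : ∀ d, 0 ≤ r d := by
    intro d
    apply mul_nonneg (Nat.cast_nonneg _)
    exact mul_nonneg (pow_nonneg hp0 _) (pow_nonneg hq0 _)
  have hU : U t (ENNReal.ofReal p) (ENNReal.ofReal (1 - p)) 1 =
      ∑' d : ℕ, ENNReal.ofReal (r d) := by
    rw [U_one t ht]
    apply tsum_congr
    intro d
    simp only [hr]
    rw [ENNReal.ofReal_mul (Nat.cast_nonneg _), ENNReal.ofReal_mul (pow_nonneg hp0 _),
      ENNReal.ofReal_pow hp0, ENNReal.ofReal_pow hq0, ENNReal.ofReal_natCast]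
  have hRt : Rt t p = ∑' d : ℕ, r d := by
    rw [Rt, treeFun, ← tsum_mul_left]
    apply tsum_congr
    intro d
    simp only [hr]
    have hD : (d : ℝ) * ((t:ℝ) - 1) + 1 = (((t - 1) * d + 1 : ℕ) : ℝ) := by
      rw [Nat.cast_add, Nat.cast_mul, Nat.cast_sub (by omega : 1 ≤ t)]
      push_cast
      ring
    have hDpos : (0:ℝ) < (((t - 1) * d + 1 : ℕ) : ℝ) := by
      exact_mod_cast Nat.succ_le_of_lt (Nat.lt_of_lt_of_le Nat.zero_lt_one (by omega))
    have hch : ((d * t).choose d : ℝ) = (((t - 1) * d + 1 : ℕ) : ℝ) * (Nat.card (FPd t d) : ℝ) := by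
      rw [mul_comm d t]
      exact_mod_cast congrArg (Nat.cast (R := ℝ)) (choose_iden t d ht)
    have hz : ((1 - p) * p ^ (t - 1)) ^ d = (1 - p) ^ d * p ^ ((t - 1) * d) := by
      rw [mul_pow, pow_mul]
    rw [hD, hch, hz]
    have hre : (((t - 1) * d + 1 : ℕ) : ℝ) * (Nat.card (FPd t d) : ℝ) *
        ((1 - p) ^ d * p ^ ((t - 1) * d)) =
        (((t - 1) * d + 1 : ℕ) : ℝ) * ((Nat.card (FPd t d) : ℝ) *
          ((1 - p) ^ d * p ^ ((t - 1) * d))) := by ring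
    rw [hre, mul_div_cancel_left₀ _ (ne_of_gt hDpos)]
    ring
  have hsummable : Summable r := by
    have h1 : Summable (fun d => (ENNReal.ofReal (r d)).toReal) := by
      apply ENNReal.summable_toReal
      rw [← hU]
      exact hfin
    have h2 : (fun d => (ENNReal.ofReal (r d)).toReal) = r := by
      funext d
      exact ENNReal.toReal_ofReal (hrpos d)
    rwa [h2] at h1
  rw [hU, hRt, ENNReal.ofReal_tsum_of_nonneg hrpos hsummable]

end BRW

/-- For i.i.d. Bernoulli(p) variables `Y_i` with `0 < p < (t−1)/t` for an
integer `t ≥ 2`, nonnegative integers `r, b` with `m = b(t−1) − r ≥ 1`, and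
`M_{r,b} = sup_{n≥1} (r + Y_1 + ⋯ + Y_n)/(r + b + n)`, we have
`P(M_{r,b} ≤ (t−1)/t) = 1 − R_t(p)^{m+1}`. -/
theorem bernoulli_shifted_running_max_le_t_ratio {Ω : Type*} [MeasurableSpace Ω]
    (μ : Measure Ω) [IsProbabilityMeasure μ] (p : ℝ) (t r b m : ℕ) (ht : 2 ≤ t)
    (hp0 : 0 < p) (hp : p < ((t : ℝ) - 1) / t)
    (hm : b * (t - 1) = r + m) (hm1 : 1 ≤ m)
    (Y : ℕ → Ω → ℝ) (hmeas : ∀ i, Measurable (Y i))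
    (hindep : iIndepFun Y μ)
    (h01 : ∀ i ω, Y i ω = 0 ∨ Y i ω = 1)
    (hbern : ∀ i, μ {ω | Y i ω = 1} = ENNReal.ofReal p)
    (M : Ω → ℝ)
    (hM : ∀ ω, M ω = ⨆ n : ℕ,
      ((r : ℝ) + ∑ i ∈ Finset.range (n + 1), Y i ω) / ((r : ℝ) + b + (n + 1))) :
    μ {ω | M ω ≤ ((t : ℝ) - 1) / t} = ENNReal.ofReal (1 - Rt t p ^ (m + 1)) := by
  classical
  have htR : (2:ℝ) ≤ (t:ℝ) := by exact_mod_cast ht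
  have htpos : (0:ℝ) < t := by linarith
  have hp1 : p < 1 := lt_of_lt_of_le hp (by rw [div_le_one htpos]; linarith)
  have hp0' : (0:ℝ) ≤ p := le_of_lt hp0
  have hp1' : p ≤ 1 := le_of_lt hp1
  have hmZ : (b:ℤ) * ((t:ℤ) - 1) = (r:ℤ) + (m:ℤ) := by
    have := congrArg (Nat.cast (R := ℤ)) hm
    push_cast [Nat.cast_sub (show 1 ≤ t by omega)] at this
    linarith
  -- pointwise equivalence of the running-max condition with the walk condition
  have hterm : ∀ (ω : Ω) (n : ℕ),
      ((r : ℝ) + ∑ i ∈ Finset.range (n + 1), Y i ω) / ((r : ℝ) + b + (n + 1)) ≤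
        ((t : ℝ) - 1) / t ↔ BRW.gw t Y (n + 1) ω ≤ (m : ℤ) := by
    intro ω n
    have hden : (0:ℝ) < (r : ℝ) + b + (n + 1) := by positivity
    rw [div_le_div_iff₀ hden htpos]
    rw [BRW.S_eq Y h01 (n + 1) ω]
    set c : ℤ := ∑ i ∈ Finset.range (n + 1), (if BRW.sB Y ω i then (1:ℤ) else 0) with hc
    have hcastiff : ((r : ℝ) + (c : ℝ)) * t ≤ ((t : ℝ) - 1) * ((r : ℝ) + b + (n + 1)) ↔
        (((r : ℤ) + c) * t ≤ ((t : ℤ) - 1) * ((r : ℤ) + b + (n + 1))) := by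
      rw [show ((r : ℝ) + (c : ℝ)) * t = ((((r : ℤ) + c) * t : ℤ) : ℝ) by push_cast; ring,
        show ((t : ℝ) - 1) * ((r : ℝ) + b + (n + 1)) =
          ((((t : ℤ) - 1) * ((r : ℤ) + b + (n + 1)) : ℤ) : ℝ) by push_cast; ring,
        Int.cast_le]
    rw [hcastiff, BRW.gw_eq t Y (n + 1) ω, ← hc]
    have he : ((t:ℤ) - 1) * ((r : ℤ) + b + (n + 1)) - ((r : ℤ) + c) * t =
        (m : ℤ) - (((n:ℤ) + 1) * (1 - t) + t * c) := by linear_combination hmZ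
    constructor
    · intro h
      have hcast : ((n + 1 : ℕ) : ℤ) = (n : ℤ) + 1 := by push_cast; ring
      rw [hcast]
      linarith
    · intro h
      rw [show ((n + 1 : ℕ) : ℤ) = (n : ℤ) + 1 by push_cast; ring] at h
      linarith
  -- rewrite the event
  have hset : {ω | M ω ≤ ((t : ℝ) - 1) / t} =
      {ω | ∀ n : ℕ, BRW.gw t Y (n + 1) ω ≤ (m : ℤ)} := by
    ext ω
    simp only [Set.mem_setOf_eq]
    rw [hM ω]
    have hbdd : BddAbove (Set.range fun n : ℕ =>
        ((r : ℝ) + ∑ i ∈ Finset.range (n + 1), Y i ω) / ((r : ℝ) + b + (n + 1))) := by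
      refine ⟨1, ?_⟩
      rintro x ⟨n, rfl⟩
      apply div_le_one_of_le₀
      · have hS : ∑ i ∈ Finset.range (n + 1), Y i ω ≤ (n + 1 : ℝ) := by
          calc ∑ i ∈ Finset.range (n + 1), Y i ω ≤ ∑ i ∈ Finset.range (n + 1), (1:ℝ) := by
                apply Finset.sum_le_sum
                intro i _
                rcases h01 i ω with h | h <;> rw [h] <;> norm_num
          _ = (n + 1 : ℝ) := by rw [Finset.sum_const, Finset.card_range, nsmul_eq_mul]; push_cast; ring
        have hb0 : (0:ℝ) ≤ (b:ℝ) := Nat.cast_nonneg b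
        push_cast
        linarith
      · positivity
    constructor
    · intro h n
      exact (hterm ω n).1 (le_trans (le_ciSup hbdd n) h)
    · intro h
      apply ciSup_le
      intro n
      exact (hterm ω n).2 (h n)
  have hcompl : {ω | ∀ n : ℕ, BRW.gw t Y (n + 1) ω ≤ (m : ℤ)} =
      {ω | ∃ n : ℕ, ((m + 1 : ℕ) : ℤ) ≤ BRW.gw t Y (n + 1) ω}ᶜ := by
    ext ω
    simp only [Set.mem_setOf_eq, Set.mem_compl_iff, not_exists]
    constructor
    · intro h n hcon
      have := h n
      push_cast at hcon
      omega
    · intro h n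
      have := h n
      push_cast at this
      omega
  rw [hset, hcompl]
  have hEvmeas : MeasurableSet {ω | ∃ n : ℕ, ((m + 1 : ℕ) : ℤ) ≤ BRW.gw t Y (n + 1) ω} := by
    rw [BRW.Ev_eq t Y (show 1 ≤ m + 1 by omega)]
    exact MeasurableSet.iUnion fun l => BRW.Cyl_measurable Y hmeas l.1
  rw [measure_compl hEvmeas (measure_ne_top μ _), measure_univ]
  have hEv := BRW.measure_Ev μ t p Y hmeas hindep hbern hp0' hp1'
    (k := m + 1) (by omega)
  rw [hEv, BRW.U_pow t _ _ m]
  have hU1le : BRW.U t (ENNReal.ofReal p) (ENNReal.ofReal (1 - p)) 1 ≤ 1 := by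
    rw [← BRW.measure_Ev μ t p Y hmeas hindep hbern hp0' hp1' (k := 1) le_rfl]
    exact prob_le_one
  have hU1fin : BRW.U t (ENNReal.ofReal p) (ENNReal.ofReal (1 - p)) 1 ≠ ⊤ :=
    ne_top_of_le_ne_top ENNReal.one_ne_top hU1le
  have hU1 : BRW.U t (ENNReal.ofReal p) (ENNReal.ofReal (1 - p)) 1 =
      ENNReal.ofReal (Rt t p) := BRW.U_one_eq_Rt t ht hp0' hp1' hU1fin
  have hRt0 : 0 ≤ Rt t p := BRW.Rt_nonneg ht hp0' hp1'
  rw [hU1, ← ENNReal.ofReal_pow hRt0]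
  rw [ENNReal.ofReal_sub _ (pow_nonneg hRt0 _), ENNReal.ofReal_one]
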